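/- Let ⪯ be a total order on a finite set D of weighted axis-parallel segments refining the order by weight, and suppose the ⪯-lexicographically-maximum optimum solution S_max has ⪯-minimum element R_min. If every segment R ≺ R_min is removed from D, then every optimum solution of the resulting instance contains the ⪯-minimum segment of the remaining set. -/

import Mathlib

open Finset

def IsRect (R : Set (ℝ × ℝ)) : Prop :=
  ∃ x1 x2 y1 y2 : ℝ, R = Set.Icc x1 x2 ×ˢ Set.Icc y1 y2

def IsSeg (R : Set (ℝ × ℝ)) : Prop :=
  ∃ x1 x2 y1 y2 : ℝ, (x1 = x2 ∨ y1 = y2) ∧ R = Set.Icc x1 x2 ×ˢ Set.Icc y1 y2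

/-- A solution: a subset of `D` of cardinality at most `k` consisting of pairwise disjoint
objects. -/
def IsSolution (D : Finset (Set (ℝ × ℝ))) (k : ℕ) (S : Finset (Set (ℝ × ℝ))) : Prop :=
  S ⊆ D ∧ S.card ≤ k ∧ (↑S : Set (Set (ℝ × ℝ))).Pairwise Disjoint

/-- `optk D ω k` : the maximum total `ω`-weight of a set of at most `k` pairwise disjoint
members of `D`. -/
noncomputable def optk (D : Finset (Set (ℝ × ℝ))) (ω : Set (ℝ × ℝ) → ℝ) (k : ℕ) : ℝ :=
  sSup {w : ℝ | ∃ S : Finset (Set (ℝ × ℝ)), IsSolution D k S ∧ w = ∑ R ∈ S, ω R}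

/-- if `Smax` is the lexicographically maximum optimum solution (w.r.t. a
total order `⪯`, encoded by a rank function `ρ` injective on `D` and refining the weight
order) with `⪯`-minimum element `Rmin`, and all segments `≺ Rmin` are removed from `D`,
then every optimum solution of the new instance contains the `⪯`-minimum remaining
segment. -/
theorem stmt12 (D : Finset (Set (ℝ × ℝ))) (ω : Set (ℝ × ℝ) → ℝ) (k : ℕ)
    (hseg : ∀ R ∈ D, IsSeg R) (hpos : ∀ R ∈ D, 0 < ω R)
    (ρ : Set (ℝ × ℝ) → ℕ) (hinj : Set.InjOn ρ (↑D : Set (Set (ℝ × ℝ))))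
    (hrefine : ∀ R ∈ D, ∀ R' ∈ D, ω R < ω R' → ρ R < ρ R')
    (Smax : Finset (Set (ℝ × ℝ))) (hSmax : IsSolution D k Smax)
    (hopt : ∑ R ∈ Smax, ω R = optk D ω k)
    (hlexmax : ∀ S : Finset (Set (ℝ × ℝ)), IsSolution D k S →
      ∑ R ∈ S, ω R = optk D ω k → S ≠ Smax →
      List.Lex (· < ·) ((S.image ρ).sort (· ≤ ·)) ((Smax.image ρ).sort (· ≤ ·)))
    (Rmin : Set (ℝ × ℝ)) (hRmin : Rmin ∈ Smax) (hmin : ∀ R ∈ Smax, ρ Rmin ≤ ρ R)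
    (D' : Finset (Set (ℝ × ℝ)))
    (hD' : ∀ R, R ∈ D' ↔ R ∈ D ∧ ρ Rmin ≤ ρ R) :
    ∀ S' : Finset (Set (ℝ × ℝ)), IsSolution D' k S' →
      ∑ R ∈ S', ω R = optk D' ω k →
      ∀ R0 ∈ D', (∀ R ∈ D', ρ R0 ≤ ρ R) → R0 ∈ S' := by
  intro S' hS' hopt' R0 hR0 hminR0
  obtain ⟨hSmaxD, hSmaxk, hSmaxdis⟩ := hSmax
  obtain ⟨hS'D', hS'k, hS'dis⟩ := hS'
  have hD'subD : D' ⊆ D := fun R hR => ((hD' R).1 hR).1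
  have hRminD : Rmin ∈ D := hSmaxD hRmin
  have hRminD' : Rmin ∈ D' := (hD' Rmin).2 ⟨hRminD, le_refl _⟩
  have hR0D : R0 ∈ D := hD'subD hR0
  have hρeq : ρ R0 = ρ Rmin := le_antisymm (hminR0 Rmin hRminD') ((hD' R0).1 hR0).2
  have hR0eq : R0 = Rmin := hinj hR0D hRminD hρeq
  rw [hR0eq]
  -- boundedness of solution-weight sets
  have key : ∀ E : Finset (Set (ℝ × ℝ)), E ⊆ D →
      BddAbove {w : ℝ | ∃ S : Finset (Set (ℝ × ℝ)), IsSolution E k S ∧ w = ∑ R ∈ S, ω R} := by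
    intro E hE
    refine ⟨∑ R ∈ D, ω R, ?_⟩
    rintro w ⟨S, hS, rfl⟩
    exact Finset.sum_le_sum_of_subset_of_nonneg (hS.1.trans hE)
      (fun R hR _ => (hpos R hR).le)
  have hS'solD : IsSolution D k S' := ⟨hS'D'.trans hD'subD, hS'k, hS'dis⟩
  have hS'leD : ∑ R ∈ S', ω R ≤ optk D ω k :=
    le_csSup (key D (subset_refl D)) ⟨S', hS'solD, rfl⟩
  have hSmaxsubD' : Smax ⊆ D' := fun R hR => (hD' R).2 ⟨hSmaxD hR, hmin R hR⟩
  have hSmaxleD' : ∑ R ∈ Smax, ω R ≤ optk D' ω k :=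
    le_csSup (key D' hD'subD) ⟨Smax, ⟨hSmaxsubD', hSmaxk, hSmaxdis⟩, rfl⟩
  have hS'opt : ∑ R ∈ S', ω R = optk D ω k := by
    rw [hopt'] at *
    exact le_antisymm hS'leD (hopt ▸ hSmaxleD')
  by_cases hEq : S' = Smax
  · rw [hEq]; exact hRmin
  have hlex := hlexmax S' hS'solD hS'opt hEq
  -- S' is nonempty
  have hS'ne : S'.Nonempty := by
    rcases S'.eq_empty_or_nonempty with h | h
    · exfalso
      have hz : ∑ R ∈ S', ω R = 0 := by rw [h]; simp
      have hppos : 0 < ∑ R ∈ Smax, ω R :=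
        Finset.sum_pos (fun R hR => hpos R (hSmaxD hR)) ⟨Rmin, hRmin⟩
      rw [hopt] at hppos
      rw [hz] at hS'opt
      exact absurd hS'opt.symm (ne_of_gt hppos)
    · exact h
  -- decompose the sorted lists
  have hmemL : ρ Rmin ∈ (Smax.image ρ).sort (· ≤ ·) :=
    (Finset.mem_sort (α := ℕ) (· ≤ ·)).2 (Finset.mem_image_of_mem ρ hRmin)
  obtain ⟨a, t, hcons⟩ := List.exists_cons_of_ne_nil (List.ne_nil_of_mem hmemL)
  obtain ⟨Rw, hRw⟩ := hS'ne
  have hmemL' : ρ Rw ∈ (S'.image ρ).sort (· ≤ ·) :=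
    (Finset.mem_sort (α := ℕ) (· ≤ ·)).2 (Finset.mem_image_of_mem ρ hRw)
  obtain ⟨a', t', hcons'⟩ := List.exists_cons_of_ne_nil (List.ne_nil_of_mem hmemL')
  -- head of Smax's list is ρ Rmin
  have hsorted : ((Smax.image ρ).sort (· ≤ ·)).Pairwise (· ≤ ·) := Finset.pairwise_sort _ _
  have haIm : a ∈ Smax.image ρ := by
    refine (Finset.mem_sort (α := ℕ) (· ≤ ·)).1 ?_
    rw [hcons]; exact List.mem_cons_self
  obtain ⟨Ra, hRa, hρRa⟩ := Finset.mem_image.1 haIm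
  have h1 : ρ Rmin ≤ a := hρRa ▸ hmin Ra hRa
  have h2 : a ≤ ρ Rmin := by
    rw [hcons] at hmemL hsorted
    rcases List.mem_cons.1 hmemL with h | h
    · exact le_of_eq h.symm
    · exact (List.pairwise_cons.1 hsorted).1 _ h
  have haeq : a = ρ Rmin := le_antisymm h2 h1
  -- every element of S''s list is ≥ ρ Rmin
  have hlow : ∀ b ∈ (S'.image ρ).sort (· ≤ ·), ρ Rmin ≤ b := by
    intro b hb
    obtain ⟨Rb, hRb, hρRb⟩ := Finset.mem_image.1 ((Finset.mem_sort (α := ℕ) (· ≤ ·)).1 hb)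
    exact hρRb ▸ ((hD' Rb).1 (hS'D' hRb)).2
  have ha' : ρ Rmin ≤ a' := by
    apply hlow
    rw [hcons']; exact List.mem_cons_self
  rw [hcons, hcons', haeq] at hlex
  cases hlex with
  | rel h => exact absurd h (not_lt.2 ha')
  | cons h =>
    -- here a' = ρ Rmin, so ρ Rmin ∈ S'.image ρ
    have : ρ Rmin ∈ S'.image ρ := by
      refine (Finset.mem_sort (α := ℕ) (· ≤ ·)).1 ?_
      rw [hcons']; exact List.mem_cons_self
    obtain ⟨R, hRS', hρR⟩ := Finset.mem_image.1 this
    have : R = Rmin := hinj (hD'subD (hS'D' hRS')) hRminD hρR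
    rwa [this] at hRS'
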